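/- Subset Sum reduction correctness: let S be a finite multiset of positive integers and T a positive integer. Construct variables {v_a : a ∈ S} ∪ {v_T} with natural-number values, operator ⊕ = addition, and alternatives α_T, β_T, α_Σ, β_Σ defined by: α_T(v_a)=0 for a∈S and α_T(v_T)=1; β_T ≡ 0; α_Σ(v_a)=a and α_Σ(v_T)=0; β_Σ(v_a)=0 and β_Σ(v_T)=T. Then there exists a hierarchical model satisfying all three statements α_T > β_T, α_Σ ≥ β_Σ, and β_Σ ≥ α_Σ if and only if there exists a sub-multiset A ⊆ S with Σ_{a∈A} a = T. -/

import Mathlib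

/-- `π ⊨ α ≥ β` for a hierarchical model `π` with `⊕` = addition:
lexicographic comparison of the level-wise sums. -/
def SumGe {V : Type*} (π : List (Finset V)) (α β : V → ℕ) : Prop :=
  (∀ Y ∈ π, ∑ y ∈ Y, α y = ∑ y ∈ Y, β y) ∨
  ∃ i : Fin π.length, ∑ y ∈ π.get i, α y > ∑ y ∈ π.get i, β y ∧
    ∀ j : Fin π.length, (j : ℕ) < (i : ℕ) → ∑ y ∈ π.get j, α y = ∑ y ∈ π.get j, β y

/-- `π ⊨ α > β` for a hierarchical model `π` with `⊕` = addition. -/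
def SumGt {V : Type*} (π : List (Finset V)) (α β : V → ℕ) : Prop :=
  ∃ i : Fin π.length, ∑ y ∈ π.get i, α y > ∑ y ∈ π.get i, β y ∧
    ∀ j : Fin π.length, (j : ℕ) < (i : ℕ) → ∑ y ∈ π.get j, α y = ∑ y ∈ π.get j, β y

/-- A hierarchical model: non-empty sequence of non-empty sets of variables. -/
def ValidH {V : Type*} (π : List (Finset V)) : Prop :=
  π ≠ [] ∧ ∀ Y ∈ π, Y.Nonempty

/-- If `π ⊨ α ≥ β` and `π ⊨ β ≥ α` then all level sums agree. -/
theorem sumGe_antisymm {V : Type*} {π : List (Finset V)} {α β : V → ℕ}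
    (h1 : SumGe π α β) (h2 : SumGe π β α) :
    ∀ Y ∈ π, ∑ y ∈ Y, α y = ∑ y ∈ Y, β y := by
  rcases h1 with h1 | ⟨i, hi, hib⟩
  · exact h1
  rcases h2 with h2 | ⟨j, hj, hjb⟩
  · have := h2 (π.get i) (π.get_mem i); omega
  rcases lt_trichotomy (i : ℕ) (j : ℕ) with h | h | h
  · have := hjb i h; omega
  · have : i = j := Fin.ext h
    subst this; omega
  · have := hib j h; omega

/-- Correctness of the reduction from Subset Sum: with variables
`Option (Fin n)` (where `none` plays the role of `v_T` and `some i` of `v_{s i}`),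
there is a hierarchical model satisfying `α_T > β_T`, `α_Σ ≥ β_Σ` and
`β_Σ ≥ α_Σ` iff some subset of the multiset `s` sums to `T`. -/
theorem subsetSum_reduction {n : ℕ} (s : Fin n → ℕ) (hs : ∀ i, 0 < s i)
    (T : ℕ) (hT : 0 < T) :
    (∃ π : List (Finset (Option (Fin n))), ValidH π ∧
        SumGt π (fun v => v.elim 1 (fun _ => 0)) (fun _ => 0) ∧
        SumGe π (fun v => v.elim 0 s) (fun v => v.elim T (fun _ => 0)) ∧
        SumGe π (fun v => v.elim T (fun _ => 0)) (fun v => v.elim 0 s)) ↔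
      ∃ A : Finset (Fin n), ∑ i ∈ A, s i = T := by
  constructor
  · rintro ⟨π, hπ, ⟨i, hi, -⟩, h1, h2⟩
    have heq := sumGe_antisymm h1 h2 (π.get i) (π.get_mem i)
    set Y := π.get i with hY
    have hnone : none ∈ Y := by
      by_contra h
      have hz : ∑ y ∈ Y, (Option.elim y 1 fun _ => 0) = 0 := by
        apply Finset.sum_eq_zero
        rintro (_ | x) hx
        · exact absurd hx h
        · rfl
      simp only [hz] at hi
      simp at hi
    refine ⟨Y.eraseNone, ?_⟩
    have ha : ∑ y ∈ Y, (Option.elim y 0 s) = ∑ x ∈ Y.eraseNone, s x := by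
      rw [Finset.sum_eraseNone]
      exact Finset.sum_congr rfl (by rintro (_ | x) _ <;> rfl)
    have hb : ∑ y ∈ Y, (Option.elim y T fun _ => 0) = T := by
      rw [Finset.sum_eq_single_of_mem none hnone]
      · rfl
      · rintro (_ | x) hx hne
        · exact absurd rfl hne
        · rfl
    omega
  · rintro ⟨A, hA⟩
    refine ⟨[insert none (A.map ⟨some, Option.some_injective _⟩)], ⟨by simp, ?_⟩, ?_, ?_⟩
    · intro Y hY
      simp only [List.mem_singleton] at hY
      subst hY
      exact ⟨none, Finset.mem_insert_self _ _⟩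
    · refine ⟨⟨0, by simp⟩, ?_, ?_⟩
      · have hnone : (none : Option (Fin n)) ∉ A.map ⟨some, Option.some_injective _⟩ := by simp
        simp only [List.get]
        rw [Finset.sum_insert hnone, Finset.sum_insert hnone]
        rw [Finset.sum_map, Finset.sum_map]
        simp
      · intro j hj
        simp at hj
    · have key : ∀ Y ∈ [insert none (A.map ⟨some, Option.some_injective (Fin n)⟩)],
          ∑ y ∈ Y, (Option.elim y 0 s) = ∑ y ∈ Y, (Option.elim y T fun _ => 0) := by
        intro Y hY
        simp only [List.mem_singleton] at hY
        subst hY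
        have hnone : (none : Option (Fin n)) ∉ A.map ⟨some, Option.some_injective _⟩ := by simp
        rw [Finset.sum_insert hnone, Finset.sum_insert hnone, Finset.sum_map, Finset.sum_map]
        simp [hA]
      exact ⟨Or.inl key, Or.inl fun Y hY => (key Y hY).symm⟩
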